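/- Let m_P be the perfect metric and let (x,y) be an arc of G^∧π. If no intermediate or upper triangle {x,y,z} satisfies m_P(x,y) = m_P(x,z) + m_P(z,y) (where m_P(u,v) denotes the weight of the edge {u,v} of G*π), then the single-arc path consisting of (x,y) is the only up-down xy-path whose length under m_P equals m_P(x,y); hence the arc (x,y) cannot be deleted while preserving a shortest up-down path between every pair of vertices. -/

import Mathlib

open SimpleGraph
open scoped ENNReal

variable {V : Type*}

/-- One step of vertex contraction: remove `v` from the current graph and add an edge
between every pair of its current neighbors. -/
def chStep (H : SimpleGraph V) (v : V) : SimpleGraph V where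
  Adj a b := a ≠ b ∧ a ≠ v ∧ b ≠ v ∧ (H.Adj a b ∨ (H.Adj v a ∧ H.Adj v b))
  symm := by
    constructor
    rintro a b ⟨h1, h2, h3, h4⟩
    refine ⟨h1.symm, h3, h2, ?_⟩
    rcases h4 with h | ⟨ha, hb⟩
    · exact Or.inl h.symm
    · exact Or.inr ⟨hb, ha⟩
  loopless := ⟨fun a h => h.1 rfl⟩

/-- All edges ever present while contracting the vertices of the list in order:
the edges of the initial graph together with all added shortcuts. -/
def chList : SimpleGraph V → List V → SimpleGraph V
  | H, [] => H
  | H, v :: l => H ⊔ chList (chStep H v) l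

/-- The rank of a vertex with respect to the contraction order `π`. -/
def rk {n : ℕ} (π : Fin n ≃ V) (v : V) : ℕ := (π.symm v : ℕ)

/-- The contraction hierarchy `G*π`: contract `π 0, π 1, …` in this order and collect
all original edges and all added shortcuts. -/
def chGraph {n : ℕ} (G : SimpleGraph V) (π : Fin n ≃ V) : SimpleGraph V :=
  chList G ((List.finRange n).map ⇑π)

/-- A list of vertices is up-down w.r.t. a rank function: ranks strictly increase
along a prefix and strictly decrease along the remaining suffix, the two parts
meeting at the maximum-rank vertex. -/
def IsUpDown (r : V → ℕ) (l : List V) : Prop :=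
  ∃ l₁ x l₂, l = l₁ ++ x :: l₂ ∧
    List.Chain' (fun a b => r a < r b) (l₁ ++ [x]) ∧
    List.Chain' (fun a b => r b < r a) (x :: l₂)

/-- Reachability in the upward directed graph `G^∧π` (edges of `G*π` directed from
lower to higher rank): the vertex set of the search space `SS v`. -/
def UpReach {n : ℕ} (G : SimpleGraph V) (π : Fin n ≃ V) (v u : V) : Prop :=
  Relation.ReflTransGen (fun a b => (chGraph G π).Adj a b ∧ rk π a < rk π b) v u

/-- Length of a walk: the sum of the weights of its edges. -/
noncomputable def wlen {H : SimpleGraph V} (m : V → V → ℝ≥0∞) {s t : V}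
    (p : H.Walk s t) : ℝ≥0∞ :=
  (p.darts.map (fun d => m d.toProd.1 d.toProd.2)).sum

/-- Shortest path distance in a graph `H` under edge weights `m`. -/
noncomputable def gdist (H : SimpleGraph V) (m : V → V → ℝ≥0∞) (s t : V) : ℝ≥0∞ :=
  ⨅ (p : H.Walk s t), wlen m p

/-- Minimum length of an up-down `s`-`t` path in `G*π`. -/
noncomputable def updist {n : ℕ} (G : SimpleGraph V) (π : Fin n ≃ V)
    (m : V → V → ℝ≥0∞) (s t : V) : ℝ≥0∞ :=
  ⨅ (p : (chGraph G π).Walk s t) (_ : IsUpDown (rk π) p.support), wlen m p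

/-- Minimum length of a strictly rank-increasing `u`-`v` path in `G*π`. -/
noncomputable def upOnlyDist {n : ℕ} (G : SimpleGraph V) (π : Fin n ≃ V)
    (m : V → V → ℝ≥0∞) (u v : V) : ℝ≥0∞ :=
  ⨅ (p : (chGraph G π).Walk u v)
    (_ : List.Chain' (fun a b => rk π a < rk π b) p.support), wlen m p

/-- `S` is a balanced separator of the subgraph of `G` induced by `U`. -/
def IsBalancedSepOn [DecidableEq V] (G : SimpleGraph V) (U S : Finset V) : Prop :=
  S ⊆ U ∧ ∃ A B : Finset V, A ⊆ U ∧ B ⊆ U ∧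
    Disjoint A B ∧ Disjoint A S ∧ Disjoint B S ∧ A ∪ B ∪ S = U ∧
    (∀ a ∈ A, ∀ b ∈ B, ¬ G.Adj a b) ∧
    3 * A.card ≤ 2 * U.card ∧ 3 * B.card ≤ 2 * U.card

/-- Nested dissection orders (as lists, earliest contracted first, separator last)
of induced subgraphs of `G`, in which the separator chosen at every recursion step on
a `k`-vertex subgraph is balanced and has cardinality at most `c * k ^ α`. -/
inductive IsNDOrder [DecidableEq V] (G : SimpleGraph V) (c α : ℝ) : Finset V → List V → Prop
  | empty : IsNDOrder G c α ∅ []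
  | step {U S A B : Finset V} {lA lB lS : List V} :
      Disjoint A B → Disjoint A S → Disjoint B S → A ∪ B ∪ S = U →
      (∀ a ∈ A, ∀ b ∈ B, ¬ G.Adj a b) →
      3 * A.card ≤ 2 * U.card → 3 * B.card ≤ 2 * U.card →
      ((S.card : ℝ) ≤ c * (U.card : ℝ) ^ α) →
      lS.Nodup → lS.toFinset = S →
      IsNDOrder G c α A lA → IsNDOrder G c α B lB →
      IsNDOrder G c α U (lA ++ lB ++ lS)

/-- Number of vertices of the search space `SS v` in `G^∧π`. -/
noncomputable def nVertsSS {n : ℕ} (G : SimpleGraph V) (π : Fin n ≃ V) (v : V) : ℕ :=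
  {u | UpReach G π v u}.ncard

/-- Number of arcs of the search space `SS v` in `G^∧π`: arcs of `G^∧π` with both
endpoints reachable from `v`. -/
noncomputable def nArcsSS {n : ℕ} (G : SimpleGraph V) (π : Fin n ≃ V) (v : V) : ℕ :=
  {q : V × V | (chGraph G π).Adj q.1 q.2 ∧ rk π q.1 < rk π q.2 ∧
    UpReach G π v q.1 ∧ UpReach G π v q.2}.ncard

/-- The rank sequence of a walk: for each edge, the minimum of the ranks of its
endpoints, sorted in decreasing order. -/
def rankSeq {H : SimpleGraph V} (r : V → ℕ) {s t : V} (p : H.Walk s t) : List ℕ :=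
  (p.darts.map (fun d => min (r d.toProd.1) (r d.toProd.2))).insertionSort (· ≥ ·)

/-- Directed length of a walk in `G*π` under a pair of directed metrics `(mu, md)`:
each edge traversed from lower rank to higher rank costs its upward weight,
each edge traversed from higher rank to lower rank costs its downward weight. -/
noncomputable def dlen {H : SimpleGraph V} (r : V → ℕ) (mu md : V → V → ℝ≥0∞)
    {s t : V} (p : H.Walk s t) : ℝ≥0∞ :=
  (p.darts.map (fun d =>
    if r d.toProd.1 < r d.toProd.2 then mu d.toProd.1 d.toProd.2
    else md d.toProd.2 d.toProd.1)).sum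

/-- Length of a directed walk `s :: l` under arc weights `wD`. -/
noncomputable def dWalkLen (wD : V → V → ℝ≥0∞) : V → List V → ℝ≥0∞
  | _, [] => 0
  | s, x :: l => wD s x + dWalkLen wD x l

/-- Shortest directed path distance in the directed graph `D` under arc weights `wD`. -/
noncomputable def ddist (D : V → V → Prop) (wD : V → V → ℝ≥0∞) (s t : V) : ℝ≥0∞ :=
  ⨅ (l : List V) (_ : List.Chain D s l ∧ l.getLastD s = t), dWalkLen wD s l


section AuxStmt12

lemma chStep_adj {H : SimpleGraph V} {v a b : V} :
    (chStep H v).Adj a b ↔ (a ≠ b ∧ a ≠ v ∧ b ≠ v ∧ (H.Adj a b ∨ (H.Adj v a ∧ H.Adj v b))) :=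
  Iff.rfl

lemma wlen_cons {H : SimpleGraph V} (m : V → V → ℝ≥0∞) {s u t : V} (h : H.Adj s u)
    (p : H.Walk u t) : wlen m (SimpleGraph.Walk.cons h p) = m s u + wlen m p := by
  simp [wlen]

lemma wlen_append {H : SimpleGraph V} (m : V → V → ℝ≥0∞) {s u t : V}
    (p : H.Walk s u) (q : H.Walk u t) :
    wlen m (p.append q) = wlen m p + wlen m q := by
  simp [wlen, SimpleGraph.Walk.darts_append]

lemma gdist_triangle (G : SimpleGraph V) (w : V → V → ℝ≥0∞)
    (s u t : V) : gdist G w s t ≤ gdist G w s u + gdist G w u t := by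
  have key : ∀ (q : G.Walk s u) (r : G.Walk u t), gdist G w s t ≤ wlen w q + wlen w r := by
    intro q r
    have := iInf_le (fun p : G.Walk s t => wlen w p) (q.append r)
    rw [wlen_append] at this
    exact this
  calc gdist G w s t ≤ ⨅ (q : G.Walk s u), ⨅ (r : G.Walk u t), (wlen w q + wlen w r) :=
        le_iInf fun q => le_iInf fun r => key q r
    _ = gdist G w s u + gdist G w u t := by
        rw [gdist, gdist, ENNReal.iInf_add]
        exact iInf_congr fun q => ENNReal.add_iInf.symm

lemma gdist_le_wlen {n : ℕ} (G : SimpleGraph V) (π : Fin n ≃ V) (w : V → V → ℝ≥0∞)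
    {s t : V} (p : (chGraph G π).Walk s t) :
    gdist G w s t ≤ wlen (fun a b => gdist G w a b) p := by
  induction p with
  | nil => exact (iInf_le _ SimpleGraph.Walk.nil).trans_eq (by simp [wlen])
  | @cons s u t h q ih =>
    rw [wlen_cons]
    exact (gdist_triangle G w s u t).trans (add_le_add le_rfl ih)

lemma gdist_pos (G : SimpleGraph V) [Finite V] (w : V → V → ℝ≥0∞)
    (hw_pos : ∀ a b, G.Adj a b → 0 < w a b) {a b : V} (hab : a ≠ b) :
    0 < gdist G w a b := by
  classical
  set f : V × V → ℝ≥0∞ := fun q => if G.Adj q.1 q.2 then w q.1 q.2 else ⊤ with hf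
  have hfpos : ∀ q, 0 < f q := by
    intro q
    by_cases h : G.Adj q.1 q.2
    · simpa [hf, h] using hw_pos _ _ h
    · simp [hf, h]
  have hne : Nonempty (V × V) := ⟨(a, b)⟩
  obtain ⟨q0, hq0⟩ := Finite.exists_min f
  have hmin : 0 < ⨅ q, f q := by
    have h1 : (⨅ q, f q) = f q0 := le_antisymm (iInf_le _ _) (le_iInf hq0)
    rw [h1]; exact hfpos q0
  refine lt_of_lt_of_le hmin (le_iInf ?_)
  intro p
  cases p with
  | nil => exact absurd rfl hab
  | @cons _ u _ h q =>
    rw [wlen_cons]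
    calc (⨅ q, f q) ≤ f (a, u) := iInf_le _ _
      _ = w a u := by simp [hf, h]
      _ ≤ w a u + wlen w q := le_self_add

lemma gdist_lt_top (G : SimpleGraph V) (hG : G.Connected) (w : V → V → ℝ≥0∞)
    (hw : ∀ a b, G.Adj a b → w a b < ⊤) (s t : V) : gdist G w s t < ⊤ := by
  obtain ⟨p⟩ := hG.preconnected s t
  refine lt_of_le_of_lt (iInf_le _ p) ?_
  induction p with
  | nil => simp [wlen]
  | cons h q ih => rw [wlen_cons]; exact ENNReal.add_lt_top.mpr ⟨hw _ _ h, ih⟩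

lemma le_chList (H : SimpleGraph V) (l : List V) : H ≤ chList H l := by
  cases l with
  | nil => exact le_rfl
  | cons v l => exact le_sup_left

lemma chList_isolated (l : List V) (H : SimpleGraph V) (x : V)
    (hx : ∀ b, ¬ H.Adj x b) : ∀ b, ¬ (chList H l).Adj x b := by
  induction l generalizing H with
  | nil => exact hx
  | cons v l ih =>
    intro b hb
    simp only [chList, SimpleGraph.sup_adj] at hb
    rcases hb with hb | hb
    · exact hx b hb
    · refine ih (chStep H v) (fun c hc => ?_) b hb
      rcases (chStep_adj.mp hc).2.2.2 with h | ⟨h1, h2⟩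
      · exact hx c h
      · exact hx v h1.symm

lemma chList_triangle : ∀ (l₁ : List V) (H : SimpleGraph V) (l₂ : List V) (x z y : V),
    z ≠ y → x ∉ l₁ → z ∉ l₁ → y ∉ l₁ →
    (chList H (l₁ ++ x :: l₂)).Adj x z → (chList H (l₁ ++ x :: l₂)).Adj x y →
    (chList H (l₁ ++ x :: l₂)).Adj z y := by
  intro l₁
  induction l₁ with
  | nil =>
    intro H l₂ x z y hzy _ _ _ hxz hxy
    simp only [List.nil_append, chList, SimpleGraph.sup_adj] at hxz hxy ⊢
    have hiso : ∀ b, ¬ (chList (chStep H x) l₂).Adj x b :=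
      chList_isolated l₂ _ x (fun b hb => (chStep_adj.mp hb).2.1 rfl)
    have hxz' : H.Adj x z := hxz.resolve_right (hiso z)
    have hxy' : H.Adj x y := hxy.resolve_right (hiso y)
    exact Or.inr (le_chList _ l₂ (chStep_adj.mpr ⟨hzy, hxz'.ne', hxy'.ne', Or.inr ⟨hxz', hxy'⟩⟩))
  | cons v l₁ ih =>
    intro H l₂ x z y hzy hx hz hy hxz hxy
    rw [List.mem_cons, not_or] at hx hz hy
    simp only [List.cons_append, chList, SimpleGraph.sup_adj] at hxz hxy ⊢
    refine Or.inr (ih (chStep H v) l₂ x z y hzy hx.2 hz.2 hy.2 ?_ ?_)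
    · rcases hxz with h | h
      · exact le_chList _ _ (chStep_adj.mpr ⟨h.ne, hx.1, hz.1, Or.inl h⟩)
      · exact h
    · rcases hxy with h | h
      · exact le_chList _ _ (chStep_adj.mpr ⟨h.ne, hx.1, hy.1, Or.inl h⟩)
      · exact h

lemma finRange_decomp {n : ℕ} (π : Fin n ≃ V) (x : V) :
    (List.finRange n).map ⇑π =
      (((List.finRange n).take (rk π x)).map ⇑π) ++ x ::
        (((List.finRange n).drop (rk π x + 1)).map ⇑π) ∧
      (∀ v : V, rk π x ≤ rk π v → v ∉ ((List.finRange n).take (rk π x)).map ⇑π) := by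
  set i : Fin n := π.symm x with hi
  have hlen : (i : ℕ) < (List.finRange n).length := by
    simpa [List.length_finRange] using i.isLt
  have hdecomp : List.finRange n =
      (List.finRange n).take (i : ℕ) ++ i :: (List.finRange n).drop ((i : ℕ) + 1) := by
    conv_lhs => rw [← List.take_append_drop (i : ℕ) (List.finRange n)]
    rw [List.drop_eq_getElem_cons hlen, List.getElem_finRange]
    congr 2
  constructor
  · conv_lhs => rw [hdecomp]
    have : π i = x := π.apply_symm_apply x
    simp [rk, ← hi, this]
  · intro v hv hmem
    rw [List.mem_map] at hmem
    obtain ⟨j, hj, rfl⟩ := hmem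
    have hp := List.pairwise_lt_finRange n
    rw [hdecomp, List.pairwise_append] at hp
    have hji : j < i := by
      refine hp.2.2 j ?_ i List.mem_cons_self
      simpa [rk, ← hi] using hj
    have hj' : rk π (π j) = (j : ℕ) := by simp [rk]
    have hix : rk π x = (i : ℕ) := by simp [rk, ← hi]
    rw [hj', hix] at hv
    exact absurd hv (not_le.mpr hji)

lemma chGraph_lower_triangle {n : ℕ} (G : SimpleGraph V) (π : Fin n ≃ V) {x z y : V}
    (hxz : (chGraph G π).Adj x z) (hxy : (chGraph G π).Adj x y)
    (hrz : rk π x < rk π z) (hry : rk π x < rk π y) (hzy : z ≠ y) :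
    (chGraph G π).Adj z y := by
  obtain ⟨hmap, hkey⟩ := finRange_decomp π x
  rw [chGraph, hmap] at hxz hxy ⊢
  exact chList_triangle _ G _ x z y hzy (hkey x le_rfl) (hkey z hrz.le) (hkey y hry.le) hxz hxy

lemma updown_head_lt {r : V → ℕ} {a b : V} {l : List V} (h : IsUpDown r (a :: b :: l))
    {c : V} (hc : c ∈ b :: l) (hac : r a < r c) : r a < r b := by
  haveI : IsTrans V (fun u v => r v < r u) := ⟨fun a b c h1 h2 => h2.trans h1⟩
  obtain ⟨l₁, pk, l₂, heq, hup, hdn⟩ := h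
  cases l₁ with
  | nil =>
    simp only [List.nil_append, List.cons.injEq] at heq
    obtain ⟨rfl, rfl⟩ := heq
    have hpw := (List.isChain_iff_pairwise).mp hdn
    exact absurd hac (not_lt.mpr (List.rel_of_pairwise_cons hpw hc).le)
  | cons a' l₁' =>
    simp only [List.cons_append, List.cons.injEq] at heq
    obtain ⟨rfl, heq⟩ := heq
    cases l₁' with
    | nil =>
      simp only [List.nil_append, List.cons.injEq] at heq
      obtain ⟨rfl, rfl⟩ := heq
      exact (List.isChain_cons_cons.mp hup).1
    | cons b' l₁'' =>
      simp only [List.cons_append, List.cons.injEq] at heq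
      obtain ⟨rfl, heq⟩ := heq
      exact (List.isChain_cons_cons.mp hup).1

end AuxStmt12

/-- If no intermediate or upper triangle `{x, y, z}` satisfies
`m_P x y = m_P x z + m_P z y`, then the single-arc path consisting of the arc
`(x, y)` is the only up-down `x`-`y` path whose length under the perfect metric
`m_P` equals `m_P x y`. -/
theorem stmt12 {V : Type*} {n : ℕ} (G : SimpleGraph V) (hG : G.Connected)
    (π : Fin n ≃ V) (w : V → V → ℝ≥0∞)
    (hw_symm : ∀ a b, w a b = w b a)
    (hw_pos : ∀ a b, G.Adj a b → 0 < w a b ∧ w a b < ⊤)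
    (x y : V) (hxy : (chGraph G π).Adj x y) (hr : rk π x < rk π y)
    (hno : ¬ ∃ z : V, (chGraph G π).Adj x z ∧ (chGraph G π).Adj z y ∧ rk π x < rk π z ∧
      gdist G w x y = gdist G w x z + gdist G w z y) :
    ∀ p : (chGraph G π).Walk x y, IsUpDown (rk π) p.support →
      wlen (fun a b => gdist G w a b) p = gdist G w x y → p.support = [x, y] := by
  classical
  haveI : Finite V := Finite.intro π.symm
  intro p hud hlen
  cases p with
  | nil => exact absurd hr (lt_irrefl _)
  | @cons _ v1 _ h q =>
    cases q with
    | nil => simp [SimpleGraph.Walk.support_cons, SimpleGraph.Walk.support_nil]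
    | @cons _ v2 _ h' q' =>
      exfalso
      by_cases hv1y : v1 = y
      · subst hv1y
        rw [wlen_cons, wlen_cons] at hlen
        have hfin : gdist G w x v1 ≠ ⊤ :=
          (gdist_lt_top G hG w (fun a b hab => (hw_pos a b hab).2) x v1).ne
        have h0 : gdist G w v1 v2 + wlen (fun a b => gdist G w a b) q' = 0 := by
          refine (ENNReal.add_right_inj hfin).mp ?_
          rw [add_zero]; exact hlen
        have h1 : gdist G w v1 v2 = 0 := (add_eq_zero.mp h0).1
        exact (gdist_pos G w (fun a b hab => (hw_pos a b hab).1) h'.ne).ne' h1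
      · have hrxv1 : rk π x < rk π v1 := by
          rw [SimpleGraph.Walk.support_cons, SimpleGraph.Walk.support_cons] at hud
          exact updown_head_lt hud
            (List.mem_cons_of_mem v1 q'.end_mem_support) hr
        have hlow : gdist G w v1 y ≤
            wlen (fun a b => gdist G w a b) (SimpleGraph.Walk.cons h' q') :=
          gdist_le_wlen G π w _
        rw [wlen_cons] at hlen
        have heq2 : gdist G w x y = gdist G w x v1 + gdist G w v1 y := by
          refine le_antisymm (gdist_triangle G w x v1 y) ?_
          calc gdist G w x v1 + gdist G w v1 y
              ≤ gdist G w x v1 +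
                wlen (fun a b => gdist G w a b) (SimpleGraph.Walk.cons h' q') :=
                add_le_add le_rfl hlow
            _ = gdist G w x y := hlen
        exact hno ⟨v1, h, chGraph_lower_triangle G π h hxy hrxv1 hr hv1y, hrxv1, heq2⟩
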